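/- Let D, t, u, v be positive integers such that D is not a perfect square and the continued fraction expansion of √D is [t; \overline{u, v, u, 2t}] (period length 4). Then there exists a positive integer y such that D = ((u(y(uv+2) − v²) − v)/2)² + y(uv+2) − v² − y, where in particular u(y(uv+2) − v²) − v is even. -/

import Mathlib

/-- Iterated Gauss map: `gaussIter x n` is the `n`-th complete quotient of the
continued fraction expansion of `x`. -/
noncomputable def gaussIter (x : ℝ) : ℕ → ℝ
  | 0 => x
  | n + 1 => (gaussIter x n - ⌊gaussIter x n⌋)⁻¹

/-- `cfCoeff x n` is the `n`-th partial quotient of the continued fraction of `x`. -/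
noncomputable def cfCoeff (x : ℝ) (n : ℕ) : ℤ := ⌊gaussIter x n⌋

/-- `IsPeriodicCF x k a` says that the continued fraction expansion of `x` is
`[a 0; a 1, …, a k, a 1, …, a k, …]`, i.e. `x = [a 0; \overline{a 1, …, a k}]`,
where the partial quotients `a 1, …, a k` are positive and `a k = 2 * a 0`. -/
def IsPeriodicCF (x : ℝ) (k : ℕ) (a : ℕ → ℤ) : Prop :=
  0 < a 0 ∧ (∀ i : ℕ, 1 ≤ i → i ≤ k → 0 < a i) ∧ a k = 2 * a 0 ∧
    cfCoeff x 0 = a 0 ∧ ∀ n : ℕ, 1 ≤ n → cfCoeff x n = a ((n - 1) % k + 1)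

lemma gaussIter_irrational {x : ℝ} (hx : Irrational x) : ∀ n, Irrational (gaussIter x n)
  | 0 => hx
  | n + 1 => ((gaussIter_irrational hx n).sub_intCast _).inv

lemma gaussIter_add (x : ℝ) (m n : ℕ) : gaussIter x (m + n) = gaussIter (gaussIter x m) n := by
  induction n with
  | zero => rfl
  | succ n ih =>
      show (gaussIter x (m + n) - (⌊gaussIter x (m + n)⌋ : ℝ))⁻¹ =
        (gaussIter (gaussIter x m) n - (⌊gaussIter (gaussIter x m) n⌋ : ℝ))⁻¹
      rw [ih]

lemma cfCoeff_add (x : ℝ) (m n : ℕ) : cfCoeff (gaussIter x m) n = cfCoeff x (m + n) := by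
  unfold cfCoeff; rw [gaussIter_add]

lemma stream_eq {x : ℝ} (hx : Irrational x) :
    ∀ n, GenContFract.IntFractPair.stream x n =
      some ⟨⌊gaussIter x n⌋, Int.fract (gaussIter x n)⟩
  | 0 => rfl
  | n + 1 => by
      have hfr : Int.fract (gaussIter x n) ≠ 0 := by
        intro h0
        have := (gaussIter_irrational hx n).ne_int ⌊gaussIter x n⌋
        apply this
        have := Int.fract_eq_iff.mp h0
        unfold Int.fract at h0
        linarith [h0]
      have h := GenContFract.IntFractPair.stream_succ_of_some (stream_eq hx n) hfr
      rw [h]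
      congr 1

lemma gauss_step {x : ℝ} (hx : Irrational x) (n : ℕ) :
    (gaussIter x n - (⌊gaussIter x n⌋ : ℝ)) * gaussIter x (n + 1) = 1 := by
  have hne : gaussIter x n - (⌊gaussIter x n⌋ : ℝ) ≠ 0 :=
    sub_ne_zero.mpr ((gaussIter_irrational hx n).ne_int _)
  exact mul_inv_cancel₀ hne

lemma cf_determines {x y : ℝ} (hx : Irrational x) (hy : Irrational y)
    (h : ∀ n, cfCoeff x n = cfCoeff y n) : x = y := by
  have hs : (GenContFract.of x).s = (GenContFract.of y).s := by
    apply Stream'.Seq.ext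
    intro n
    rw [GenContFract.get?_of_eq_some_of_succ_get?_intFractPair_stream (stream_eq hx (n + 1)),
      GenContFract.get?_of_eq_some_of_succ_get?_intFractPair_stream (stream_eq hy (n + 1))]
    have := h (n + 1)
    unfold cfCoeff at this
    simp [this]
  have hh : (GenContFract.of x).h = (GenContFract.of y).h := by
    rw [GenContFract.of_h_eq_floor, GenContFract.of_h_eq_floor]
    exact_mod_cast h 0
  have hof : GenContFract.of x = GenContFract.of y := by
    calc GenContFract.of x = ⟨(GenContFract.of y).h, (GenContFract.of y).s⟩ := by
          rw [← hh, ← hs]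
      _ = GenContFract.of y := rfl
  have tx := GenContFract.of_convergence x
  have ty := GenContFract.of_convergence y
  rw [hof] at tx
  exact tendsto_nhds_unique tx ty

lemma int_endgame (D t u v : ℕ) (hu : 0 < u) (hv : 0 < v)
    (EZ : (u : ℤ) * (u * v + 2) * ((D : ℤ) - t ^ 2) = 2 * t * (u * v + 1) + v)
    (hd1 : 1 ≤ (D : ℤ) - (t : ℤ) ^ 2) :
    ∃ y : ℤ, 0 < y ∧
      2 ∣ ((u : ℤ) * (y * (u * v + 2) - (v : ℤ) ^ 2) - v) ∧
      (D : ℤ) = (((u : ℤ) * (y * (u * v + 2) - (v : ℤ) ^ 2) - v) / 2) ^ 2 +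
        y * (u * v + 2) - (v : ℤ) ^ 2 - y := by
  have hdvd : (u : ℤ) ∣ (2 * t + v) := by
    refine ⟨(u * v + 2) * ((D : ℤ) - t ^ 2) - 2 * t * v, ?_⟩
    linear_combination -EZ
  obtain ⟨c, hc⟩ := hdvd
  refine ⟨c - ((D : ℤ) - t ^ 2), ?_, ?_, ?_⟩
  all_goals
    have huy : (u : ℤ) * (c - ((D : ℤ) - t ^ 2)) = 2 * t + v - u * ((D : ℤ) - t ^ 2) := by
      linear_combination -hc
    have hu0 : (u : ℤ) ≠ 0 := by exact_mod_cast hu.ne'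
    have hyd : (c - ((D : ℤ) - t ^ 2)) * (u * v + 1) - (v : ℤ) ^ 2 = (D : ℤ) - t ^ 2 := by
      apply mul_left_cancel₀ hu0
      linear_combination ((u : ℤ) * v + 1) * huy - EZ
    have hexpr : (u : ℤ) * ((c - ((D : ℤ) - t ^ 2)) * ((u : ℤ) * v + 2) - (v : ℤ) ^ 2)
        - (v : ℤ) = 2 * t := by
      linear_combination ((u : ℤ) * v + 2) * huy - EZ
  · -- positivity
    have hv1 : (1 : ℤ) ≤ (v : ℤ) := by exact_mod_cast hv
    have hu1 : (1 : ℤ) ≤ (u : ℤ) := by exact_mod_cast hu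
    by_contra hy'
    push_neg at hy'
    nlinarith [hyd, hd1, hv1, hu1,
      mul_nonneg (neg_nonneg.mpr hy') (show (0:ℤ) ≤ (u:ℤ)*v+1 by positivity)]
  · rw [hexpr]
    exact ⟨t, by ring⟩
  · rw [hexpr, show (2 * (t : ℤ)) / 2 = t by omega]
    linear_combination -hyd

/-- If `√D = [t; \overline{u, v, u, 2t}]` (period length 4), then there is a
positive integer `y` with `u(y(uv+2) − v²) − v` even and
`D = ((u(y(uv+2) − v²) − v)/2)² + y(uv+2) − v² − y`. -/
theorem sqrt_cf_period_four_param (D t u v : ℕ) (hD : 0 < D) (ht : 0 < t)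
    (hu : 0 < u) (hv : 0 < v) (hsq : ¬ IsSquare D)
    (h : IsPeriodicCF (Real.sqrt D) 4
      (fun n => if n = 0 then (t : ℤ) else if n = 1 then u else if n = 2 then v
        else if n = 3 then u else 2 * t)) :
    ∃ y : ℤ, 0 < y ∧
      2 ∣ ((u : ℤ) * (y * (u * v + 2) - (v : ℤ) ^ 2) - v) ∧
      (D : ℤ) = (((u : ℤ) * (y * (u * v + 2) - (v : ℤ) ^ 2) - v) / 2) ^ 2 +
        y * (u * v + 2) - (v : ℤ) ^ 2 - y := by
  obtain ⟨-, -, -, h0, hn⟩ := h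
  set x : ℝ := Real.sqrt D with hxdef
  have hx : Irrational x := irrational_sqrt_natCast_iff.mpr hsq
  -- periodicity of complete quotients
  have hper : gaussIter x 5 = gaussIter x 1 := by
    apply cf_determines (gaussIter_irrational hx 5) (gaussIter_irrational hx 1)
    intro n
    rw [cfCoeff_add, cfCoeff_add, hn (5 + n) (by omega), hn (1 + n) (by omega)]
    congr 1
    omega
  -- floor values
  have f0 : (⌊gaussIter x 0⌋ : ℤ) = (t : ℤ) := by simpa [cfCoeff] using h0
  have f1 : (⌊gaussIter x 1⌋ : ℤ) = (u : ℤ) := by simpa [cfCoeff] using hn 1 (by norm_num)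
  have f2 : (⌊gaussIter x 2⌋ : ℤ) = (v : ℤ) := by simpa [cfCoeff] using hn 2 (by norm_num)
  have f3 : (⌊gaussIter x 3⌋ : ℤ) = (u : ℤ) := by simpa [cfCoeff] using hn 3 (by norm_num)
  have f4 : (⌊gaussIter x 4⌋ : ℤ) = 2 * (t : ℤ) := by simpa [cfCoeff] using hn 4 (by norm_num)
  -- the five step equations
  set x1 := gaussIter x 1 with hx1
  set x2 := gaussIter x 2 with hx2
  set x3 := gaussIter x 3 with hx3
  set x4 := gaussIter x 4 with hx4
  have e0 : (x - (t : ℝ)) * x1 = 1 := by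
    have := gauss_step hx 0
    rw [f0] at this
    simpa [gaussIter, hx1] using this
  have e1 : (x1 - (u : ℝ)) * x2 = 1 := by
    have := gauss_step hx 1
    rw [f1] at this
    simpa using this
  have e2 : (x2 - (v : ℝ)) * x3 = 1 := by
    have := gauss_step hx 2
    rw [f2] at this
    simpa using this
  have e3 : (x3 - (u : ℝ)) * x4 = 1 := by
    have := gauss_step hx 3
    rw [f3] at this
    simpa using this
  have e4 : (x4 - 2 * (t : ℝ)) * x1 = 1 := by
    have := gauss_step hx 4
    rw [f4] at this
    rw [hper] at this
    simpa using this
  have hxsq : x ^ 2 = (D : ℝ) := Real.sq_sqrt (by positivity)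
  -- eliminate x2, x3, x4
  have h23 : (x1 - u) + ((v : ℝ) * (x1 - u) - 1) * x3 = 0 := by
    linear_combination x3 * e1 - (x1 - (u : ℝ)) * e2
  have h234 : ((x1 - u) * (1 + (u : ℝ) * v) - u) * x4 + (v : ℝ) * (x1 - u) - 1 = 0 := by
    linear_combination x4 * h23 - ((v : ℝ) * (x1 - u) - 1) * e3
  have h2345 : (2 * (t : ℝ) * (1 + u * v) + v) * x1 ^ 2
      - 2 * t * u * (u * v + 2) * x1 - u * (u * v + 2) = 0 := by
    linear_combination x1 * h234 - ((1 + (u : ℝ) * v) * x1 - u * (u * v + 2)) * e4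
  have hkey : (u : ℝ) * (u * v + 2) * ((D : ℝ) - t ^ 2) = 2 * t * (u * v + 1) + v := by
    linear_combination (-(x - (t : ℝ)) ^ 2) * h2345
      + ((2 * (t : ℝ) * (u * v + 1) + v) * ((x - t) * x1 + 1)
          - 2 * t * u * (u * v + 2) * (x - t)) * e0
      - (u : ℝ) * (u * v + 2) * hxsq
  have EZ : (u : ℤ) * (u * v + 2) * ((D : ℤ) - t ^ 2) = 2 * t * (u * v + 1) + v := by
    exact_mod_cast hkey
  have hd1 : 1 ≤ (D : ℤ) - (t : ℤ) ^ 2 := by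
    have htx : ((t : ℤ) : ℝ) ≤ x := f0 ▸ Int.floor_le (gaussIter x 0)
    have t0 : (0 : ℝ) ≤ ((t : ℤ) : ℝ) := by positivity
    have ht2 : ((t : ℝ)) ^ 2 ≤ (D : ℝ) := by
      have := pow_le_pow_left₀ t0 htx 2
      rw [hxsq] at this
      exact_mod_cast this
    have ht2' : t ^ 2 ≤ D := by exact_mod_cast ht2
    have hne : t ^ 2 ≠ D := fun hEq => hsq ⟨t, by rw [← hEq]; ring⟩
    have : t ^ 2 < D := lt_of_le_of_ne ht2' hne
    have : (t : ℤ) ^ 2 < (D : ℤ) := by exact_mod_cast this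
    omega
  exact int_endgame D t u v hu hv EZ hd1
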